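/- Let φ : ℝ^N → ℝ be continuously differentiable and let y : [0,∞) → ℝ^N be a differentiable solution of the gradient flow ẏ(t) = −∇φ(y(t)) whose trajectory is bounded, and let y_∞ be an accumulation point of the trajectory at which the Lojasiewicz gradient inequality holds (there exist γ ∈ [1/2, 1), C_L > 0 and r > 0 such that |φ(z) − φ(y_∞)|^γ ≤ C_L ‖∇φ(z)‖ whenever ‖z − y_∞‖ < r). Then the trajectory has finite length, ∫_0^∞ ‖ẏ(s)‖ ds < ∞, and converges: y(t) → y_∞ as t → ∞. -/

import Mathlib

open Filter

/-- a bounded gradient-flow trajectory `ẏ = −∇φ(y)` with an accumulation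
point `y_∞` at which the Lojasiewicz gradient inequality holds has finite length,
`∫_0^∞ ‖ẏ(s)‖ ds < ∞`, and converges: `y(t) → y_∞` as `t → ∞`. -/
theorem gradient_flow_finite_length_and_convergence {Nn : ℕ}
    (φ : EuclideanSpace ℝ (Fin Nn) → ℝ) (hφ : ContDiff ℝ 1 φ)
    (y y' : ℝ → EuclideanSpace ℝ (Fin Nn))
    (hy : ∀ t, 0 ≤ t → HasDerivAt y (y' t) t)
    (hgf : ∀ t, 0 ≤ t → y' t = -gradient φ (y t))
    (hbd : ∃ M : ℝ, ∀ t, 0 ≤ t → ‖y t‖ ≤ M)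
    (y_inf : EuclideanSpace ℝ (Fin Nn))
    (hacc : ∃ tn : ℕ → ℝ, (∀ k, 0 ≤ tn k) ∧ Tendsto tn atTop atTop ∧
      Tendsto (fun k => y (tn k)) atTop (nhds y_inf))
    (γ C_L r : ℝ) (hγ : γ ∈ Set.Ico (1/2 : ℝ) 1) (hCL : 0 < C_L) (hr : 0 < r)
    (hLoj : ∀ z, ‖z - y_inf‖ < r → |φ z - φ y_inf| ^ γ ≤ C_L * ‖gradient φ z‖) :
    MeasureTheory.IntegrableOn (fun s => ‖y' s‖) (Set.Ici (0 : ℝ)) ∧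
      Tendsto y atTop (nhds y_inf) := by
  obtain ⟨hγhalf, hγlt⟩ := hγ
  have hγ0 : (0 : ℝ) < γ := lt_of_lt_of_le (by norm_num) hγhalf
  have h1γ : (0 : ℝ) < 1 - γ := by linarith
  obtain ⟨tn, htn0, htninf, htny⟩ := hacc
  set c : ℝ := (1 - γ) / C_L with hc
  have hc0 : 0 < c := div_pos h1γ hCL
  have hφd : Differentiable ℝ φ := hφ.differentiable one_ne_zero
  have hgc : Continuous fun x => gradient φ x := by
    simp only [gradient]
    exact (InnerProductSpace.toDual ℝ _).symm.continuous.comp (hφ.continuous_fderiv one_ne_zero)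
  set w : ℝ → ℝ := fun t => ‖gradient φ (y t)‖ with hw
  have hw0 : ∀ t, 0 ≤ w t := fun t => norm_nonneg _
  have hyc : ∀ t, 0 ≤ t → ContinuousAt y t := fun t ht => (hy t ht).continuousAt
  have hwc : ContinuousOn w (Set.Ici 0) := fun t ht =>
    ((continuous_norm.comp hgc).continuousAt).comp_continuousWithinAt
      ((hyc t ht).continuousWithinAt)
  have hweq : ∀ t, 0 ≤ t → ‖y' t‖ = w t := by
    intro t ht; rw [hgf t ht, norm_neg]
  set F : ℝ → ℝ := fun t => φ (y t) - φ y_inf with hF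
  have hFd : ∀ t, 0 ≤ t → HasDerivAt F (-(w t ^ 2)) t := by
    intro t ht
    have h1 : HasFDerivAt φ ((InnerProductSpace.toDual ℝ _) (gradient φ (y t))) (y t) :=
      (hφd (y t)).hasGradientAt.hasFDerivAt
    have h2 := (h1.comp_hasDerivAt t (hy t ht)).sub_const (φ y_inf)
    refine h2.congr_deriv ?_
    rw [InnerProductSpace.toDual_apply_apply, hgf t ht, inner_neg_right,
      real_inner_self_eq_norm_sq]
  have hFc : ContinuousOn F (Set.Ici 0) := fun t ht =>
    ((hFd t ht).continuousAt).continuousWithinAt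
  have hFanti : AntitoneOn F (Set.Ici 0) := by
    apply antitoneOn_of_deriv_nonpos (convex_Ici 0) hFc
    · intro t ht
      rw [interior_Ici] at ht
      exact ((hFd t ht.le).differentiableAt).differentiableWithinAt
    · intro t ht
      rw [interior_Ici] at ht
      rw [(hFd t ht.le).deriv]
      simp [sq_nonneg]
  have hFtn : Tendsto (fun k => F (tn k)) atTop (nhds 0) := by
    have h1 : Tendsto (fun k => φ (y (tn k))) atTop (nhds (φ y_inf)) :=
      ((hφ.continuous.tendsto (y_inf)).comp htny)
    have h2 := h1.sub_const (φ y_inf)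
    simpa using h2
  have hFnonneg : ∀ t, 0 ≤ t → 0 ≤ F t := by
    intro t ht
    refine le_of_tendsto hFtn ?_
    filter_upwards [htninf.eventually_ge_atTop t] with k hk
    exact hFanti ht (ht.trans hk) hk
  have hdisp : ∀ a b, 0 ≤ a → a ≤ b → ‖y b - y a‖ ≤ ∫ s in a..b, w s := by
    intro a b ha hab
    have huIcc : Set.uIcc a b = Set.Icc a b := Set.uIcc_of_le hab
    have hv : ∀ t ∈ Set.uIcc a b, HasDerivAt y (-(gradient φ (y t))) t := by
      intro t ht
      rw [huIcc] at ht
      have h0t : 0 ≤ t := ha.trans ht.1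
      have := hy t h0t
      rwa [hgf t h0t] at this
    have hvi : IntervalIntegrable (fun t => -(gradient φ (y t))) MeasureTheory.volume a b := by
      apply ContinuousOn.intervalIntegrable
      rw [huIcc]
      intro t ht
      exact ((hgc.continuousAt).comp_continuousWithinAt
        ((hyc t (ha.trans ht.1)).continuousWithinAt)).neg
    have heq := intervalIntegral.integral_eq_sub_of_hasDerivAt hv hvi
    calc ‖y b - y a‖ = ‖∫ t in a..b, -(gradient φ (y t))‖ := by rw [heq]
      _ ≤ ∫ t in a..b, ‖-(gradient φ (y t))‖ :=
          intervalIntegral.norm_integral_le_integral_norm hab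
      _ = ∫ t in a..b, w t := by simp [hw]
  by_cases hpos : ∀ t, 0 ≤ t → 0 < F t
  · -- main case
    set ψ : ℝ → ℝ := fun t => F t ^ (1 - γ) with hψ
    have hψd : ∀ t, 0 ≤ t →
        HasDerivAt ψ (-(w t ^ 2) * (1 - γ) * F t ^ (1 - γ - 1)) t := by
      intro t ht
      exact (hFd t ht).rpow_const (Or.inl (hpos t ht).ne')
    have hψnn : ∀ t, 0 ≤ t → 0 ≤ ψ t := fun t ht =>
      Real.rpow_nonneg (hFnonneg t ht) _
    have hψanti : AntitoneOn ψ (Set.Ici 0) := fun a ha b hb hab =>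
      Real.rpow_le_rpow (hFnonneg b hb) (hFanti ha hb hab) h1γ.le
    have hψc : ContinuousOn ψ (Set.Ici 0) :=
      hFc.rpow_const (fun t _ => Or.inr h1γ.le)
    have hψtn : Tendsto (fun k => ψ (tn k)) atTop (nhds 0) := by
      have h1 := hFtn.rpow_const (p := 1 - γ) (Or.inr h1γ.le)
      rwa [Real.zero_rpow h1γ.ne'] at h1
    have hkey' : ∀ t, 0 ≤ t → ‖y t - y_inf‖ < r →
        -(w t ^ 2) * (1 - γ) * F t ^ (1 - γ - 1) + c * w t ≤ 0 := by
      intro t ht hball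
      have hFt : 0 < F t := hpos t ht
      have hLoj' := hLoj (y t) hball
      rw [abs_of_nonneg (hFnonneg t ht)] at hLoj'
      have hFγ : (0 : ℝ) < F t ^ γ := Real.rpow_pos_of_pos hFt γ
      have hLw : F t ^ γ ≤ C_L * w t := hLoj'
      have hwt : 0 < w t := by
        have h1 : 0 < C_L * w t := lt_of_lt_of_le hFγ hLw
        nlinarith [hw0 t]
      have hexp : F t ^ (1 - γ - 1) = (F t ^ γ)⁻¹ := by
        rw [show (1 - γ - 1) = -γ by ring, Real.rpow_neg hFt.le]
      rw [hexp]
      have h3 : c * F t ^ γ ≤ (1 - γ) * w t := by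
        have h4 : c * (F t ^ γ) ≤ c * (C_L * w t) :=
          mul_le_mul_of_nonneg_left hLw hc0.le
        calc c * F t ^ γ ≤ c * (C_L * w t) := h4
          _ = (1 - γ) * w t := by rw [hc]; field_simp [hCL.ne']
      have h5 : c * w t * F t ^ γ ≤ w t ^ 2 * (1 - γ) := by nlinarith
      have h6 : c * w t ≤ w t ^ 2 * (1 - γ) / F t ^ γ := (le_div_iff₀ hFγ).mpr h5
      rw [div_eq_mul_inv] at h6
      linarith
    have hkey : ∀ a b, 0 ≤ a → a ≤ b → (∀ s, s ∈ Set.Icc a b → ‖y s - y_inf‖ < r) →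
        c * ∫ s in a..b, w s ≤ ψ a - ψ b := by
      intro a b ha hab hball
      have hIccsub : Set.Icc a b ⊆ Set.Ici 0 := fun s hs => ha.trans hs.1
      have hwI : MeasureTheory.IntegrableOn w (Set.Icc a b) :=
        (hwc.mono hIccsub).integrableOn_Icc
      set h : ℝ → ℝ := fun t => ψ t + c * ∫ s in a..t, w s with hh
      have hprim : ContinuousOn (fun t => ∫ s in a..t, w s) (Set.Icc a b) := by
        have h1 := intervalIntegral.continuousOn_primitive_interval
          (f := w) (μ := MeasureTheory.volume) (a := a) (b := b)
          (by rwa [Set.uIcc_of_le hab])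
        rwa [Set.uIcc_of_le hab] at h1
      have hhc : ContinuousOn h (Set.Icc a b) :=
        ContinuousOn.add (hψc.mono hIccsub) (continuousOn_const.mul hprim)
      have hhd : ∀ t ∈ interior (Set.Icc a b),
          HasDerivAt h (-(w t ^ 2) * (1 - γ) * F t ^ (1 - γ - 1) + c * w t) t := by
        intro t ht
        rw [interior_Icc] at ht
        have ht0 : 0 ≤ t := ha.trans ht.1.le
        have htpos : 0 < t := lt_of_le_of_lt ha ht.1
        have hwat : ContinuousAt w t := hwc.continuousAt (Ici_mem_nhds htpos)
        have hGd : HasDerivAt (fun u => ∫ s in a..u, w s) (w t) t := by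
          apply intervalIntegral.integral_hasDerivAt_right
          · apply ContinuousOn.intervalIntegrable
            apply hwc.mono
            intro s hs
            rw [Set.uIcc_of_le ht.1.le] at hs
            exact ha.trans hs.1
          · exact ContinuousOn.stronglyMeasurableAtFilter isOpen_Ioi
              (hwc.mono Set.Ioi_subset_Ici_self) t htpos
          · exact hwat
        exact (hψd t ht0).add (hGd.const_mul c)
      have hanti : AntitoneOn h (Set.Icc a b) := by
        apply antitoneOn_of_deriv_nonpos (convex_Icc a b) hhc
        · intro t ht
          exact ((hhd t ht).differentiableAt).differentiableWithinAt
        · intro t ht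
          rw [(hhd t ht).deriv]
          have htm : t ∈ Set.Icc a b := interior_subset ht
          rw [interior_Icc] at ht
          exact hkey' t (ha.trans ht.1.le) (hball t htm)
      have hba := hanti (Set.left_mem_Icc.mpr hab) (Set.right_mem_Icc.mpr hab) hab
      simp only [hh, intervalIntegral.integral_same, mul_zero, add_zero] at hba
      linarith
    -- choose T
    have hev1 : ∀ᶠ k in atTop, dist (y (tn k)) y_inf < r / 2 :=
      htny.eventually (Metric.ball_mem_nhds y_inf (by positivity))
    have hev2 : ∀ᶠ k in atTop, ψ (tn k) < c * (r / 4) :=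
      hψtn.eventually (eventually_lt_nhds (by positivity))
    obtain ⟨k₀, hk1, hk2⟩ := (hev1.and hev2).exists
    set T := tn k₀ with hT
    have hT0 : 0 ≤ T := htn0 k₀
    have hyT : ‖y T - y_inf‖ < r / 2 := by rw [← dist_eq_norm]; exact hk1
    have hψT : ψ T < c * (r / 4) := hk2
    -- trajectory stays in the ball
    have hball : ∀ t, T ≤ t → ‖y t - y_inf‖ < r := by
      by_contra hcon
      push_neg at hcon
      obtain ⟨t₂, ht₂T, ht₂r⟩ := hcon
      set A : Set ℝ := {t | T ≤ t ∧ r ≤ ‖y t - y_inf‖} with hA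
      have hAne : A.Nonempty := ⟨t₂, ht₂T, ht₂r⟩
      have hAbdd : BddBelow A := ⟨T, fun t ht => ht.1⟩
      have hAclosed : IsClosed A := by
        have hAeq : A = Set.Ici T ∩ (fun t => ‖y t - y_inf‖) ⁻¹' Set.Ici r := by
          ext t; simp [hA, Set.mem_Ici, and_comm]
        rw [hAeq]
        apply ContinuousOn.preimage_isClosed_of_isClosed ?_ isClosed_Ici isClosed_Ici
        intro t ht
        exact (((hyc t (hT0.trans ht)).continuousWithinAt).sub
          continuousWithinAt_const).norm
      set t₁ := sInf A with ht₁
      have ht₁A : t₁ ∈ A := hAclosed.csInf_mem hAne hAbdd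
      have hTt₁ : T < t₁ := by
        rcases lt_or_eq_of_le ht₁A.1 with h | h
        · exact h
        · exfalso; have := ht₁A.2; rw [← h] at this; linarith
      have hlt : ∀ s, T ≤ s → s < t₁ → ‖y s - y_inf‖ < r := by
        intro s hs1 hs2
        by_contra hcon2
        push_neg at hcon2
        exact absurd (csInf_le hAbdd ⟨hs1, hcon2⟩) (not_le.mpr hs2)
      have hbnd : ∀ s, s ∈ Set.Ico T t₁ → ‖y s - y_inf‖ ≤ 3 / 4 * r := by
        intro s hs
        have hkey_s := hkey T s hT0 hs.1
          (fun u hu => hlt u hu.1 (lt_of_le_of_lt hu.2 hs.2))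
        have hψs : 0 ≤ ψ s := hψnn s (hT0.trans hs.1)
        have hint : ∫ u in T..s, w u ≤ r / 4 := by
          have h1 : c * ∫ u in T..s, w u ≤ c * (r / 4) := by linarith
          exact le_of_mul_le_mul_left h1 hc0
        have hys := hdisp T s hT0 hs.1
        have htri : ‖y s - y_inf‖ ≤ ‖y s - y T‖ + ‖y T - y_inf‖ := by
          have : y s - y_inf = (y s - y T) + (y T - y_inf) := by abel
          rw [this]; exact norm_add_le _ _
        linarith
      have hne : (nhdsWithin t₁ (Set.Ico T t₁)).NeBot := by
        rw [← mem_closure_iff_nhdsWithin_neBot, closure_Ico hTt₁.ne]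
        exact ⟨hTt₁.le, le_rfl⟩
      have hcw : ContinuousWithinAt (fun s => ‖y s - y_inf‖) (Set.Ico T t₁) t₁ :=
        (((hyc t₁ (hT0.trans hTt₁.le)).continuousWithinAt).sub
          continuousWithinAt_const).norm
      have hlim : ‖y t₁ - y_inf‖ ≤ 3 / 4 * r := by
        refine le_of_tendsto hcw ?_
        filter_upwards [self_mem_nhdsWithin] with s hs using hbnd s hs
      have := ht₁A.2
      linarith
    -- integrability
    have hbnd2 : ∀ b, T ≤ b → ∫ s in T..b, w s ≤ ψ T / c := by
      intro b hb
      have h1 := hkey T b hT0 hb (fun u hu => hball u hu.1)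
      have h2 : 0 ≤ ψ b := hψnn b (hT0.trans hb)
      rw [le_div_iff₀ hc0]
      linarith
    have hIoiT : MeasureTheory.IntegrableOn w (Set.Ioi T) := by
      apply MeasureTheory.integrableOn_Ioi_of_intervalIntegral_norm_bounded
        (ψ T / c) T (b := fun n : ℕ => T + n) (l := atTop)
      · intro i
        apply ((hwc.mono ?_).integrableOn_Icc).mono_set Set.Ioc_subset_Icc_self
        intro s hs
        exact hT0.trans hs.1
      · exact tendsto_atTop_add_const_left atTop T tendsto_natCast_atTop_atTop
      · filter_upwards with i
        have : (∫ x in T..(T + (i : ℝ)), ‖w x‖) = ∫ x in T..(T + (i : ℝ)), w x := by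
          apply intervalIntegral.integral_congr
          intro x _
          exact Real.norm_of_nonneg (hw0 x)
        rw [this]
        exact hbnd2 _ (le_add_of_nonneg_right (Nat.cast_nonneg i))
    have hIci0 : MeasureTheory.IntegrableOn w (Set.Ici 0) := by
      apply MeasureTheory.IntegrableOn.mono_set
        (((hwc.mono (Set.Icc_subset_Ici_self)).integrableOn_Icc).union hIoiT)
      intro t ht
      rcases le_or_gt t T with h | h
      · exact Or.inl ⟨ht, h⟩
      · exact Or.inr h
    constructor
    · apply MeasureTheory.IntegrableOn.congr_fun hIci0 ?_ measurableSet_Ici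
      intro t ht
      exact (hweq t ht).symm
    · rw [Metric.tendsto_atTop]
      intro ε hε
      have hev3 : ∀ᶠ k in atTop, T ≤ tn k := htninf.eventually_ge_atTop T
      have hev4 : ∀ᶠ k in atTop, ψ (tn k) < c * (ε / 3) :=
        hψtn.eventually (eventually_lt_nhds (by positivity))
      have hev5 : ∀ᶠ k in atTop, dist (y (tn k)) y_inf < ε / 3 :=
        htny.eventually (Metric.ball_mem_nhds y_inf (by positivity))
      obtain ⟨k₁, hkk⟩ := ((hev3.and hev4).and hev5).exists
      obtain ⟨⟨hk3, hk4⟩, hk5⟩ := hkk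
      refine ⟨tn k₁, fun t htk => ?_⟩
      set N := tn k₁ with hN
      have hN0 : 0 ≤ N := htn0 k₁
      have h1 := hkey N t hN0 htk (fun u hu => hball u (hk3.trans hu.1))
      have h2 : 0 ≤ ψ t := hψnn t (hN0.trans htk)
      have h3 : ∫ u in N..t, w u ≤ ε / 3 := by
        have h4 : c * ∫ u in N..t, w u ≤ c * (ε / 3) := by linarith
        exact le_of_mul_le_mul_left h4 hc0
      have h5 := hdisp N t hN0 htk
      have htri : dist (y t) y_inf ≤ ‖y t - y N‖ + dist (y N) y_inf := by
        rw [dist_eq_norm, dist_eq_norm]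
        have : y t - y_inf = (y t - y N) + (y N - y_inf) := by abel
        rw [this]; exact norm_add_le _ _
      linarith
  · -- degenerate case: F hits zero
    push_neg at hpos
    obtain ⟨ts, hts0, htsF⟩ := hpos
    have hFts : F ts = 0 := le_antisymm htsF (hFnonneg ts hts0)
    have hF0 : ∀ t, ts ≤ t → F t = 0 := by
      intro t ht
      have h1 : F t ≤ F ts := hFanti hts0 (hts0.trans ht) ht
      have h2 : 0 ≤ F t := hFnonneg t (hts0.trans ht)
      rw [hFts] at h1
      linarith
    have hwz : ∀ t, ts ≤ t → w t = 0 := by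
      intro t ht
      have ht0 : 0 ≤ t := hts0.trans ht
      have h1 : HasDerivWithinAt F (-(w t ^ 2)) (Set.Ici ts) t :=
        (hFd t ht0).hasDerivWithinAt
      have h2 : HasDerivWithinAt F 0 (Set.Ici ts) t := by
        refine (hasDerivWithinAt_const t (Set.Ici ts) (0 : ℝ)).congr ?_ (hF0 t ht)
        intro s hs
        exact hF0 s hs
      have hu : UniqueDiffWithinAt ℝ (Set.Ici ts) t := uniqueDiffOn_Ici ts t ht
      have h3 : -(w t ^ 2) = 0 := by
        rw [← h1.derivWithin hu, h2.derivWithin hu]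
      have h4 : w t ^ 2 = 0 := by linarith
      exact pow_eq_zero_iff two_ne_zero |>.mp h4
    have hyconst : ∀ t, ts ≤ t → y t = y ts := by
      intro t ht
      have h1 := hdisp ts t hts0 ht
      have h2 : (∫ s in ts..t, w s) = 0 := by
        rw [intervalIntegral.integral_congr (g := fun _ => (0 : ℝ)) ?_]
        · exact intervalIntegral.integral_zero
        · intro s hs
          rw [Set.uIcc_of_le ht] at hs
          exact hwz s hs.1
      rw [h2] at h1
      have h3 : y t - y ts = 0 := norm_le_zero_iff.mp h1
      exact sub_eq_zero.mp h3
    have hyinf : y_inf = y ts := by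
      have h1 : Tendsto (fun k => y (tn k)) atTop (nhds (y ts)) := by
        apply Tendsto.congr' ?_ tendsto_const_nhds
        filter_upwards [htninf.eventually_ge_atTop ts] with k hk
        exact (hyconst (tn k) hk).symm
      exact tendsto_nhds_unique htny h1
    constructor
    · have hIcc : MeasureTheory.IntegrableOn (fun s => ‖y' s‖) (Set.Icc 0 ts) := by
        apply MeasureTheory.IntegrableOn.congr_fun
          ((hwc.mono Set.Icc_subset_Ici_self).integrableOn_Icc) ?_ measurableSet_Icc
        intro t ht
        exact (hweq t ht.1).symm
      have hIci : MeasureTheory.IntegrableOn (fun s => ‖y' s‖) (Set.Ici ts) := by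
        apply MeasureTheory.IntegrableOn.congr_fun
          (MeasureTheory.integrableOn_zero) ?_ measurableSet_Ici
        intro t ht
        exact ((hweq t (hts0.trans ht)).trans (hwz t ht)).symm
      apply MeasureTheory.IntegrableOn.mono_set (hIcc.union hIci)
      intro t ht
      rcases le_or_gt t ts with h | h
      · exact Or.inl ⟨ht, h⟩
      · exact Or.inr h.le
    · apply Tendsto.congr' ?_ (tendsto_const_nhds (x := y_inf))
      filter_upwards [eventually_ge_atTop ts] with t ht
      rw [hyconst t ht, hyinf]
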